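/- arXiv:1106.5176 — 3 statements merged into one kernel-verified Lean document; each statement's English description precedes it below -/
import Mathlib

section
/- Let R₂ = 𝔽₂[X,Y]/(Y² + X·Y + X⁵ + X³ + X² + X), and write x, y for the images of X, Y in R₂. Then the square of the ideal (x, y) of R₂ equals the principal ideal (x). -/
noncomputable section

open Polynomial

/-- The polynomial `Y² + X·Y + (X⁵ + X³ + X² + X)` as an element of `𝔽₂[X][Y]`
(the outer variable is `Y`, the inner variable is `X`). -/
def f2 : Polynomial (Polynomial (ZMod 2)) :=
  X ^ 2 + C X * X + C (X ^ 5 + X ^ 3 + X ^ 2 + X)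

/-- The ring `R₂ = 𝔽₂[X,Y]/(Y² + X·Y + X⁵ + X³ + X² + X)`. -/
def R2 : Type := Polynomial (Polynomial (ZMod 2)) ⧸ Ideal.span {f2}

instance : CommRing R2 := Ideal.Quotient.commRing _

/-- The quotient map `𝔽₂[X][Y] → R₂`. -/
def toR2 : Polynomial (Polynomial (ZMod 2)) →+* R2 :=
  Ideal.Quotient.mk (Ideal.span {f2})

/-- The image `x` of `X` in `R₂`. -/
def x2 : R2 := toR2 (C X)

/-- The image `y` of `Y` in `R₂`. -/
def y2 : R2 := toR2 X

/-- In `R₂` the square of the ideal `(x, y)` is the principal ideal `(x)`. -/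
theorem stmt_5 : (Ideal.span {x2, y2}) ^ 2 = Ideal.span {x2} := by
  have hrel : y2 ^ 2 + x2 * y2 + (x2 ^ 5 + x2 ^ 3 + x2 ^ 2 + x2) = 0 := by
    have h1 : y2 ^ 2 + x2 * y2 + (x2 ^ 5 + x2 ^ 3 + x2 ^ 2 + x2) = toR2 f2 := by
      simp only [x2, y2, f2, map_add, map_mul, map_pow]
    rw [h1]
    exact Ideal.Quotient.eq_zero_iff_mem.mpr (Ideal.subset_span rfl)
  have hyy : y2 ^ 2 = x2 * (-y2 - (x2 ^ 4 + x2 ^ 2 + x2 + 1)) := by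
    linear_combination hrel
  have hx : x2 ∈ Ideal.span ({x2, y2} : Set R2) := Ideal.subset_span (by simp)
  have hy : y2 ∈ Ideal.span ({x2, y2} : Set R2) := Ideal.subset_span (by simp)
  apply le_antisymm
  · rw [pow_two, Ideal.mul_le]
    intro r hr s hs
    rw [Ideal.mem_span_pair] at hr hs
    obtain ⟨a, b, rfl⟩ := hr
    obtain ⟨c, d, rfl⟩ := hs
    rw [Ideal.mem_span_singleton]
    exact ⟨a * c * x2 + (a * d + b * c) * y2 + b * d * (-y2 - (x2 ^ 4 + x2 ^ 2 + x2 + 1)),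
      by linear_combination (b * d) * hyy⟩
  · rw [Ideal.span_singleton_le_iff_mem, pow_two]
    have hx2 : x2 = -(y2 * y2) - x2 * y2 - (x2 * x2) * (x2 ^ 3 + x2 + 1) := by
      linear_combination hrel
    have hmem : -(y2 * y2) - x2 * y2 - (x2 * x2) * (x2 ^ 3 + x2 + 1) ∈
        Ideal.span ({x2, y2} : Set R2) * Ideal.span ({x2, y2} : Set R2) :=
      sub_mem (sub_mem (neg_mem (Ideal.mul_mem_mul hy hy)) (Ideal.mul_mem_mul hx hy))
        (Ideal.mul_mem_right _ _ (Ideal.mul_mem_mul hx hx))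
    rwa [← hx2] at hmem
end
end

section
/- Let R₂ = 𝔽₂[X,Y]/(Y² + X·Y + X⁵ + X³ + X² + X), and write x, y for the images of X, Y in R₂. Then the ideal (x, y) of R₂ is not a principal ideal. -/
noncomputable section

open Polynomial

/-! ### Auxiliary machinery -/

abbrev Fq := Polynomial (ZMod 2)
abbrev S2 := Polynomial Fq

lemma f2_monic : f2.Monic := by unfold f2; monicity!
lemma f2_natDegree : f2.natDegree = 2 := by unfold f2; compute_degree!

lemma two_eq_zero : (2 : S2) = 0 := by
  have : ((2:ℕ) : S2) = 0 := CharP.cast_eq_zero S2 2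
  simpa using this

lemma zmod2_one {c : ZMod 2} (h : c ≠ 0) : c = 1 := by
  have : ∀ c : ZMod 2, c ≠ 0 → c = 1 := by decide
  exact this c h

lemma f2_dvd_C {p : Fq} (h : f2 ∣ (C p : S2)) : p = 0 := by
  by_contra hp
  obtain ⟨k, hk⟩ := h
  have hk0 : k ≠ 0 := by rintro rfl; simp at hk; exact hp (by simpa using hk)
  have := congrArg natDegree hk
  rw [natDegree_C, natDegree_mul f2_monic.ne_zero hk0, f2_natDegree] at this
  omega

lemma toR2_eq_zero {A : S2} (h : f2 ∣ A) : toR2 A = 0 :=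
  Ideal.Quotient.eq_zero_iff_mem.mpr ((Ideal.mem_span_singleton).mpr h)

lemma dvd_of_toR2_eq_zero {A : S2} (h : toR2 A = 0) : f2 ∣ A :=
  (Ideal.mem_span_singleton).mp (Ideal.Quotient.eq_zero_iff_mem.mp h)

lemma toR2_surjective : Function.Surjective toR2 :=
  Ideal.Quotient.mk_surjective

lemma reduce (g : R2) : ∃ a b : Fq, g = toR2 (C a + C b * X) := by
  obtain ⟨G, rfl⟩ := toR2_surjective g
  refine ⟨(G %ₘ f2).coeff 0, (G %ₘ f2).coeff 1, ?_⟩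
  have hd : (G %ₘ f2).natDegree ≤ 1 := by
    have := natDegree_modByMonic_lt G f2_monic (fun h => by
      have := congrArg natDegree h; simp [f2_natDegree] at this)
    rw [f2_natDegree] at this; omega
  have hrep : G %ₘ f2 = C ((G %ₘ f2).coeff 1) * X + C ((G %ₘ f2).coeff 0) :=
    eq_X_add_C_of_natDegree_le_one hd
  have hmod : toR2 (G %ₘ f2) = toR2 G := by
    have h1 : G %ₘ f2 = G - f2 * (G /ₘ f2) := modByMonic_eq_sub_mul_div G f2
    have h2 : toR2 (f2 * (G /ₘ f2)) = 0 := toR2_eq_zero ⟨_, rfl⟩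
    rw [h1, map_sub, h2, sub_zero]
  show toR2 G = _
  rw [← hmod]
  congr 1
  conv_lhs => rw [hrep]
  ring

/-- Conjugation `Y ↦ Y + X` on `𝔽₂[X][Y]`. -/
def conj : S2 →+* S2 := eval₂RingHom C (X + C X)

lemma conj_f2 : conj f2 = f2 := by
  unfold conj f2
  simp only [coe_eval₂RingHom, eval₂_add, eval₂_mul, eval₂_pow, eval₂_X, eval₂_C]
  linear_combination (X * C X + C X ^ 2) * two_eq_zero

lemma conj_dvd {A : S2} (h : f2 ∣ A) : f2 ∣ conj A := by
  obtain ⟨k, rfl⟩ := h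
  exact ⟨conj k, by rw [map_mul, conj_f2]⟩

lemma conj_C (p : Fq) : conj (C p) = C p := by simp [conj]
lemma conj_X : conj (X : S2) = X + C X := by simp [conj]

lemma norm_id (a b : Fq) :
    (C a + C b * X : S2) * conj (C a + C b * X)
      = C (a^2 + a*b*X + b^2*(X^5+X^3+X^2+X)) + C (b^2) * f2 := by
  unfold conj f2
  simp only [coe_eval₂RingHom, eval₂_add, eval₂_mul, eval₂_X, eval₂_C,
    map_add, map_mul, map_pow]
  linear_combination (C a * C b * X - (C b)^2 * ((C X)^5 + (C X)^3 + (C X)^2 + C X)) * two_eq_zero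

lemma norm_Y : (X : S2) * conj X = f2 + C (X^5+X^3+X^2+X) := by
  unfold conj f2
  simp only [coe_eval₂RingHom, eval₂_X, map_add, map_pow]
  linear_combination (-((C X)^5 + (C X)^3 + (C X)^2 + C X)) * two_eq_zero

/-- Evaluation at the point `(0,0)`. -/
def eps : S2 →+* ZMod 2 := eval₂RingHom (evalRingHom 0) 0

lemma eps_f2 : eps f2 = 0 := by
  unfold eps f2
  simp only [coe_eval₂RingHom, eval₂_add, eval₂_mul, eval₂_pow, eval₂_X, eval₂_C, coe_evalRingHom]
  simp

lemma eps_C (p : Fq) : eps (C p) = p.eval 0 := by simp [eps]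
lemma eps_X : eps (X : S2) = 0 := by simp [eps]

lemma lc_one {p : Fq} (hp : p ≠ 0) : p.leadingCoeff = 1 :=
  zmod2_one (Polynomial.leadingCoeff_ne_zero.mpr hp)

lemma q_natDegree : (X ^ 5 + X ^ 3 + X ^ 2 + X : Fq).natDegree = 5 := by compute_degree!
lemma q_monic : (X ^ 5 + X ^ 3 + X ^ 2 + X : Fq).Monic := by monicity!

lemma key (a b : Fq) (h : a^2 + a*b*X + b^2*(X^5+X^3+X^2+X) = X) : False := by
  by_cases hb : b = 0
  · subst hb
    simp only [mul_zero, zero_mul, ne_eq, OfNat.ofNat_ne_zero, not_false_eq_true,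
      zero_pow, add_zero] at h
    have ha : a ≠ 0 := by rintro rfl; simp at h; exact X_ne_zero h.symm
    have := congrArg natDegree h
    rw [natDegree_pow, natDegree_X] at this
    omega
  · set α := a.natDegree with hα
    set β := b.natDegree with hβ
    have hdbQ : (b^2*(X^5+X^3+X^2+X) : Fq).natDegree = 2*β + 5 := by
      rw [natDegree_mul (pow_ne_zero _ hb) q_monic.ne_zero, natDegree_pow, q_natDegree]
    have hlbQ : (b^2*(X^5+X^3+X^2+X) : Fq).leadingCoeff = 1 := by
      rw [leadingCoeff_mul, leadingCoeff_pow, lc_one hb, q_monic.leadingCoeff, one_pow, mul_one]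
    have hdabX : (a*b*X : Fq).natDegree ≤ α + β + 1 := by
      have h1 := natDegree_mul_le (p := a*b) (q := (X : Fq))
      have h2 := natDegree_mul_le (p := a) (q := b)
      rw [natDegree_X] at h1
      omega
    rcases le_or_gt α (β+2) with hle | hlt
    · have hco := congrArg (fun p => coeff p (2*β+5)) h
      simp only [coeff_add] at hco
      have c1 : (a^2 : Fq).coeff (2*β+5) = 0 := by
        apply coeff_eq_zero_of_natDegree_lt
        have : (a^2 : Fq).natDegree ≤ 2*α := natDegree_pow_le
        omega
      have c2 : (a*b*X : Fq).coeff (2*β+5) = 0 :=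
        coeff_eq_zero_of_natDegree_lt (by omega)
      have c3 : (b^2*(X^5+X^3+X^2+X) : Fq).coeff (2*β+5) = 1 := by
        rw [← hdbQ, coeff_natDegree, hlbQ]
      have c4 : (X : Fq).coeff (2*β+5) = 0 :=
        coeff_eq_zero_of_natDegree_lt (by rw [natDegree_X]; omega)
      rw [c1, c2, c3, c4] at hco
      simp at hco
    · have ha : a ≠ 0 := by
        rintro rfl
        rw [natDegree_zero] at hα
        omega
      have hco := congrArg (fun p => coeff p (2*α)) h
      simp only [coeff_add] at hco
      have c1 : (a^2 : Fq).coeff (2*α) = 1 := by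
        have hd : (a^2 : Fq).natDegree = 2*α := by rw [natDegree_pow]
        rw [← hd, coeff_natDegree, leadingCoeff_pow, lc_one ha, one_pow]
      have c2 : (a*b*X : Fq).coeff (2*α) = 0 :=
        coeff_eq_zero_of_natDegree_lt (by omega)
      have c3 : (b^2*(X^5+X^3+X^2+X) : Fq).coeff (2*α) = 0 :=
        coeff_eq_zero_of_natDegree_lt (by rw [hdbQ]; omega)
      have c4 : (X : Fq).coeff (2*α) = 0 :=
        coeff_eq_zero_of_natDegree_lt (by rw [natDegree_X]; omega)
      rw [c1, c2, c3, c4] at hco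
      simp at hco

lemma n_eq_X (n : Fq) (h2 : n ∣ X^2) (hq : n ∣ (X^5+X^3+X^2+X : Fq)) (hX : X ∣ n) : n = X := by
  obtain ⟨m, rfl⟩ := hX
  have hXX : (X^2 : Fq) = X * X := sq X
  have hmX : m ∣ X := (mul_dvd_mul_iff_left (X_ne_zero (R := ZMod 2))).mp (hXX ▸ h2)
  have hqr : (X^5+X^3+X^2+X : Fq) = X * (X^4+X^2+X+1) := by ring
  have hmr : m ∣ (X^4+X^2+X+1 : Fq) :=
    (mul_dvd_mul_iff_left (X_ne_zero (R := ZMod 2))).mp (hqr ▸ hq)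
  obtain ⟨v, hv⟩ := hmr
  have hm0 : m.eval 0 ≠ 0 := by
    intro h0
    have := congrArg (eval 0) hv
    simp [h0] at this
  obtain ⟨w, hw⟩ := hmX
  have hw0 : w.eval 0 = 0 := by
    have := congrArg (eval 0) hw
    simp at this
    rcases this with h | h
    · exact absurd h hm0
    · exact h
  have hXw : X ∣ w := by
    rw [X_dvd_iff, coeff_zero_eq_eval_zero]; exact hw0
  obtain ⟨u, rfl⟩ := hXw
  have hmu : (1 : Fq) = m * u := by
    have hXmu : X * 1 = X * (m * u) := by
      calc X * 1 = X := mul_one X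
      _ = m * (X * u) := hw
      _ = X * (m * u) := by ring
    exact mul_left_cancel₀ (X_ne_zero (R := ZMod 2)) hXmu
  have hm_ne : m ≠ 0 := fun h => by simp [h] at hmu
  have hu_ne : u ≠ 0 := fun h => by simp [h] at hmu
  have hdeg : m.natDegree = 0 := by
    have := congrArg natDegree hmu
    rw [natDegree_one, natDegree_mul hm_ne hu_ne] at this
    omega
  obtain ⟨c, rfl⟩ := natDegree_eq_zero.mp hdeg
  have hc : c ≠ 0 := by simpa using hm0
  rw [zmod2_one hc]
  simp

/-- The ideal `(x, y)` of `R₂` is not principal. -/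
theorem stmt_6 : ¬ (Ideal.span {x2, y2} : Ideal R2).IsPrincipal := by
  rintro ⟨g, hg⟩
  obtain ⟨a, b, hgab⟩ := reduce g
  have hx : x2 ∈ Ideal.span {g} := by
    have h0 : x2 ∈ Submodule.span R2 {g} := hg ▸ Ideal.subset_span (Set.mem_insert _ _)
    exact h0
  have hy : y2 ∈ Ideal.span {g} := by
    have h0 : y2 ∈ Submodule.span R2 {g} := hg ▸ Ideal.subset_span (Set.mem_insert_of_mem _ rfl)
    exact h0
  obtain ⟨u, hu⟩ := Ideal.mem_span_singleton'.mp hx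
  obtain ⟨v, hv⟩ := Ideal.mem_span_singleton'.mp hy
  obtain ⟨cu, du, huab⟩ := reduce u
  obtain ⟨cv, dv, hvab⟩ := reduce v
  have hgmem : g ∈ Ideal.span {x2, y2} := by
    have h0 : g ∈ Submodule.span R2 {g} := Submodule.mem_span_singleton_self g
    exact hg ▸ h0
  obtain ⟨s, t, hst⟩ := Ideal.mem_span_pair.mp hgmem
  obtain ⟨S', hS⟩ := toR2_surjective s
  obtain ⟨T', hT⟩ := toR2_surjective t
  -- divisibility in the polynomial ring
  have hdx : f2 ∣ ((C X : S2) - (C a + C b * X) * (C cu + C du * X)) := by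
    apply dvd_of_toR2_eq_zero
    rw [map_sub, map_mul, ← hgab, ← huab]
    show x2 - g * u = 0
    rw [← hu]; ring
  have hdy : f2 ∣ ((X : S2) - (C a + C b * X) * (C cv + C dv * X)) := by
    apply dvd_of_toR2_eq_zero
    rw [map_sub, map_mul, ← hgab, ← hvab]
    show y2 - g * v = 0
    rw [← hv]; ring
  have hds : f2 ∣ ((C a + C b * X : S2) - (S' * C X + T' * X)) := by
    apply dvd_of_toR2_eq_zero
    rw [map_sub, ← hgab, map_add, map_mul, map_mul, hS, hT]
    show g - (s * x2 + t * y2) = 0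
    rw [hst, sub_self]
  -- the "norms"
  set nG : Fq := a^2 + a*b*X + b^2*(X^5+X^3+X^2+X) with hnGdef
  set nU : Fq := cu^2 + cu*du*X + du^2*(X^5+X^3+X^2+X) with hnUdef
  set nV : Fq := cv^2 + cv*dv*X + dv^2*(X^5+X^3+X^2+X) with hnVdef
  -- x-norm equation : X² = nG * nU
  have hNx : f2 ∣ (C (X^2) : S2)
      - ((C a + C b * X) * conj (C a + C b * X)) * ((C cu + C du * X) * conj (C cu + C du * X)) := by
    have key1 : (C (X^2) : S2)
        - ((C a + C b * X) * conj (C a + C b * X)) * ((C cu + C du * X) * conj (C cu + C du * X))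
        = C X * conj ((C X : S2) - (C a + C b * X) * (C cu + C du * X))
          + (conj (C a + C b * X) * conj (C cu + C du * X))
            * ((C X : S2) - (C a + C b * X) * (C cu + C du * X)) := by
      rw [map_sub, map_mul, conj_C, map_pow]
      ring
    rw [key1]
    exact dvd_add ((conj_dvd hdx).mul_left _) (hdx.mul_left _)
  have hX2eq : X^2 = nG * nU := by
    have e : (C (X^2 - nG * nU) : S2)
        = ((C (X^2) : S2)
            - ((C a + C b * X) * conj (C a + C b * X))
              * ((C cu + C du * X) * conj (C cu + C du * X)))
          + f2 * (C (b^2) * C nU + C (du^2) * C nG + C (b^2) * C (du^2) * f2) := by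
      rw [norm_id a b, norm_id cu du, map_sub, map_mul]
      ring
    have := f2_dvd_C (e ▸ dvd_add hNx (Dvd.intro _ rfl))
    exact sub_eq_zero.mp this
  -- y-norm equation : q = nG * nV
  have hNy : f2 ∣ (C (X^5+X^3+X^2+X) : S2)
      - ((C a + C b * X) * conj (C a + C b * X)) * ((C cv + C dv * X) * conj (C cv + C dv * X)) := by
    have key2 : (f2 + C (X^5+X^3+X^2+X) : S2)
        - ((C a + C b * X) * conj (C a + C b * X)) * ((C cv + C dv * X) * conj (C cv + C dv * X))
        = X * conj ((X : S2) - (C a + C b * X) * (C cv + C dv * X))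
          + (conj (C a + C b * X) * conj (C cv + C dv * X))
            * ((X : S2) - (C a + C b * X) * (C cv + C dv * X)) := by
      rw [← norm_Y, map_sub, map_mul]
      ring
    have h1 : f2 ∣ (f2 + C (X^5+X^3+X^2+X) : S2)
        - ((C a + C b * X) * conj (C a + C b * X)) * ((C cv + C dv * X) * conj (C cv + C dv * X)) := by
      rw [key2]
      exact dvd_add ((conj_dvd hdy).mul_left _) (hdy.mul_left _)
    have e2 : (C (X^5+X^3+X^2+X) : S2)
        - ((C a + C b * X) * conj (C a + C b * X)) * ((C cv + C dv * X) * conj (C cv + C dv * X))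
        = ((f2 + C (X^5+X^3+X^2+X) : S2)
            - ((C a + C b * X) * conj (C a + C b * X)) * ((C cv + C dv * X) * conj (C cv + C dv * X)))
          - f2 := by ring
    rw [e2]
    exact dvd_sub h1 dvd_rfl
  have hQeq : (X^5+X^3+X^2+X : Fq) = nG * nV := by
    have e : (C ((X^5+X^3+X^2+X) - nG * nV) : S2)
        = ((C (X^5+X^3+X^2+X) : S2)
            - ((C a + C b * X) * conj (C a + C b * X))
              * ((C cv + C dv * X) * conj (C cv + C dv * X)))
          + f2 * (C (b^2) * C nV + C (dv^2) * C nG + C (b^2) * C (dv^2) * f2) := by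
      rw [norm_id a b, norm_id cv dv, map_sub, map_mul]
      ring
    have := f2_dvd_C (e ▸ dvd_add hNy (Dvd.intro _ rfl))
    exact sub_eq_zero.mp this
  -- evaluation at (0,0) : a(0) = 0
  have ha0 : a.eval 0 = 0 := by
    obtain ⟨k, hk⟩ := hds
    have := congrArg eps hk
    simp only [map_sub, map_add, map_mul, eps_C, eps_X, eps_f2, zero_mul, mul_zero,
      add_zero, sub_zero, eval_X] at this
    simpa using this
  have hXn : X ∣ nG := by
    rw [X_dvd_iff, coeff_zero_eq_eval_zero, hnGdef]
    simp [ha0]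
  have := n_eq_X nG ⟨nU, hX2eq⟩ ⟨nV, hQeq⟩ hXn
  exact key a b (hnGdef ▸ this)
end
end

section
/- Let R₂ = 𝔽₂[X,Y]/(Y² + X·Y + X⁵ + X³ + X² + X), and write x, y for the images of X, Y in R₂. Then in ClassGroup(R₂), the class of the ideal (x − 1, y) is nontrivial and is not equal to the class of the ideal (x, y); likewise the class of the ideal (x − 1, y − 1) is nontrivial and is not equal to the class of the ideal (x, y). -/
noncomputable section

open Polynomial

abbrev P := Polynomial (ZMod 2)
abbrev PP := Polynomial P

lemma h2P : (2 : P) = 0 := by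
  rw [← map_ofNat (Polynomial.C : ZMod 2 →+* P) 2, show (2:ZMod 2) = 0 by decide, map_zero]
lemma h2PP : (2 : PP) = 0 := by
  rw [← map_ofNat (Polynomial.C : P →+* PP) 2, h2P, map_zero]

lemma toR2_eq {p q : PP} (h : f2 ∣ p - q) : toR2 p = toR2 q :=
  Ideal.Quotient.eq.mpr (Ideal.mem_span_singleton.mpr h)
lemma toR2_eq' {p q : PP} (h : toR2 p = toR2 q) : f2 ∣ p - q :=
  Ideal.mem_span_singleton.mp (Ideal.Quotient.eq.mp h)

lemma f2_deg : f2.degree = 2 := by unfold f2; compute_degree!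

lemma small_dvd {w : PP} (h : f2 ∣ w) (hd : w.degree ≤ 1) : w = 0 := by
  by_contra hw
  have := Polynomial.degree_le_of_dvd h hw
  rw [f2_deg] at this
  exact absurd (this.trans hd) (by norm_num)

lemma C_toR2_inj {p q : P} (h : toR2 (C p) = toR2 (C q)) : p = q := by
  have := small_dvd (toR2_eq' h) (by rw [← C_sub]; exact (degree_C_le).trans (by norm_num))
  rw [← C_sub] at this
  exact sub_eq_zero.mp (C_injective.eq_iff.mp (by simpa using this))

/-- the conjugation on PP : Y ↦ Y + X, composed with toR2 -/
def φ : PP →+* R2 := eval₂RingHom (toR2.comp Polynomial.C) (y2 + x2)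

lemma φ_f2 : φ f2 = 0 := by
  have : φ f2 = toR2 ((X + C X)^2 + C X * (X + C X) + C (X ^ 5 + X ^ 3 + X ^ 2 + X)) := by
    simp [φ, f2, x2, y2, map_add, map_mul, map_pow]
  rw [this, show (0 : R2) = toR2 0 from (map_zero toR2).symm]
  apply toR2_eq
  refine ⟨1, ?_⟩
  rw [f2]
  linear_combination (X * C X + C X * C X : PP) * h2PP

def σ : R2 →+* R2 := Ideal.Quotient.lift (Ideal.span {f2}) φ (by
  intro a ha
  rw [Ideal.mem_span_singleton] at ha
  obtain ⟨c, rfl⟩ := ha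
  rw [map_mul, φ_f2, zero_mul])

lemma σ_toR2 (p : PP) : σ (toR2 p) = φ p := rfl

lemma σ_x2 : σ x2 = x2 := by
  rw [x2, σ_toR2, φ]
  simp [x2]

lemma σ_y2 : σ y2 = y2 + x2 := by
  rw [y2, σ_toR2, φ]
  simp [y2]

lemma σ_one : σ 1 = 1 := map_one σ

/-- the norm form -/
def nf (a b : P) : P := a^2 + a*b*X + b^2*(X^5+X^3+X^2+X)

lemma repr_R2 (g : R2) : ∃ a b : P, g = toR2 (Polynomial.C a + Polynomial.C b * X) := by
  obtain ⟨p, rfl⟩ := Ideal.Quotient.mk_surjective g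
  refine ⟨(p %ₘ f2).coeff 0, (p %ₘ f2).coeff 1, ?_⟩
  have hmod : toR2 p = toR2 (p %ₘ f2) := by
    apply (toR2_eq ?_).symm
    exact ⟨-(p /ₘ f2), by linear_combination (Polynomial.modByMonic_add_div p f2)⟩
  have hdeg : (p %ₘ f2).degree ≤ 1 := by
    have := Polynomial.degree_modByMonic_lt p f2_monic
    rw [f2_deg] at this
    exact Order.le_of_lt_succ (by exact_mod_cast this)
  have h := Polynomial.eq_X_add_C_of_degree_le_one hdeg
  show toR2 p = toR2 (Polynomial.C ((p %ₘ f2).coeff 0) + Polynomial.C ((p %ₘ f2).coeff 1) * X)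
  rw [hmod]
  exact congrArg toR2 (h.trans (by ring))

lemma nf_spec (a b : P) :
    toR2 (Polynomial.C a + Polynomial.C b * X) * σ (toR2 (Polynomial.C a + Polynomial.C b * X))
      = toR2 (Polynomial.C (nf a b)) := by
  have hσ : σ (toR2 (Polynomial.C a + Polynomial.C b * X))
      = toR2 (Polynomial.C a + Polynomial.C b * (X + Polynomial.C X)) := by
    rw [σ_toR2, φ]
    simp [x2, y2, map_add, map_mul]
  rw [hσ, ← map_mul]
  apply toR2_eq
  refine ⟨Polynomial.C (b^2), ?_⟩
  rw [f2, nf]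
  push_cast [map_add, map_mul, map_pow]
  linear_combination (Polynomial.C a * Polynomial.C b * X - Polynomial.C b^2*(Polynomial.C X + Polynomial.C X^2 + Polynomial.C X^3 + Polynomial.C X^5) : PP) * h2PP

lemma d_deg : (X^5+X^3+X^2+X : P).natDegree = 5 := by compute_degree!
lemma d_ne : (X^5+X^3+X^2+X : P) ≠ 0 := by
  intro h
  have := d_deg
  rw [h] at this
  simp at this

lemma nf_deg {a b : P} (hb : b ≠ 0) : 5 ≤ (nf a b).natDegree := by
  set da := a.natDegree with hda
  set db := b.natDegree with hdb
  by_cases h : da ≤ db + 2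
  · -- leading term from b^2 * d at degree 2db+5
    have hk : (nf a b).coeff (2*db + 5) ≠ 0 := by
      rw [nf]
      rw [Polynomial.coeff_add, Polynomial.coeff_add]
      have h1 : (a^2).coeff (2*db+5) = 0 := by
        apply Polynomial.coeff_eq_zero_of_natDegree_lt
        calc (a^2).natDegree ≤ 2*da := Polynomial.natDegree_pow_le (p := a) (n := 2)
        _ < 2*db+5 := by omega
      have h2 : (a*b*X).coeff (2*db+5) = 0 := by
        apply Polynomial.coeff_eq_zero_of_natDegree_lt
        calc (a*b*X).natDegree ≤ da + db + 1 := by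
              refine le_trans (Polynomial.natDegree_mul_le) ?_
              have := Polynomial.natDegree_mul_le (p := a) (q := b)
              simp [Polynomial.natDegree_X]
              omega
        _ < 2*db+5 := by omega
      have h3 : (b^2*(X^5+X^3+X^2+X)).coeff (2*db+5) ≠ 0 := by
        have hd2 : (b^2).natDegree = 2*db := by rw [Polynomial.natDegree_pow]
        have := Polynomial.coeff_mul_degree_add_degree (b^2) (X^5+X^3+X^2+X : P)
        rw [hd2, d_deg] at this
        rw [this]
        apply mul_ne_zero
        · exact Polynomial.leadingCoeff_ne_zero.mpr (pow_ne_zero 2 hb)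
        · exact Polynomial.leadingCoeff_ne_zero.mpr d_ne
      rw [h1, h2]
      simpa using h3
    have := Polynomial.le_natDegree_of_ne_zero hk
    omega
  · push_neg at h
    have hk : (nf a b).coeff (2*da) ≠ 0 := by
      rw [nf, Polynomial.coeff_add, Polynomial.coeff_add]
      have h1 : (a^2).coeff (2*da) ≠ 0 := by
        have : a ≠ 0 := by
          intro h0
          subst h0
          simp only [Polynomial.natDegree_zero] at hda
          omega
        have h2 := Polynomial.coeff_mul_degree_add_degree a a
        rw [pow_two]
        rw [show 2*da = da + da by ring, h2]
        exact mul_ne_zero (Polynomial.leadingCoeff_ne_zero.mpr this) (Polynomial.leadingCoeff_ne_zero.mpr this)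
      have h2 : (a*b*X).coeff (2*da) = 0 := by
        apply Polynomial.coeff_eq_zero_of_natDegree_lt
        calc (a*b*X).natDegree ≤ da + db + 1 := by
              refine le_trans (Polynomial.natDegree_mul_le) ?_
              have := Polynomial.natDegree_mul_le (p := a) (q := b)
              simp [Polynomial.natDegree_X]
              omega
        _ < 2*da := by omega
      have h3 : (b^2*(X^5+X^3+X^2+X)).coeff (2*da) = 0 := by
        apply Polynomial.coeff_eq_zero_of_natDegree_lt
        calc (b^2*(X^5+X^3+X^2+X)).natDegree ≤ 2*db + 5 := by
              refine le_trans (Polynomial.natDegree_mul_le) ?_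
              have := Polynomial.natDegree_pow_le (p := b) (n := 2)
              rw [d_deg]
              omega
        _ < 2*da := by omega
      rw [h2, h3]
      simpa using h1
    have := Polynomial.le_natDegree_of_ne_zero hk
    omega

lemma sq_coeff_one (a : P) : (a^2).coeff 1 = 0 := by
  rw [pow_two, Polynomial.coeff_mul]
  rw [Finset.Nat.sum_antidiagonal_eq_sum_range_succ_mk]
  rw [Finset.sum_range_succ, Finset.sum_range_succ, Finset.sum_range_zero]
  simp [mul_comm]
  exact CharTwo.add_self_eq_zero _

lemma h2R : (2 : R2) = 0 := by
  rw [← map_ofNat toR2 2, h2PP, map_zero]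

def ofP (p : P) : R2 := toR2 (Polynomial.C p)

lemma nf_not {a b : P} {w : P} (hw1 : w.coeff 1 = 1) (hw5 : w.natDegree < 5) : nf a b ≠ w := by
  intro h
  by_cases hb : b = 0
  · subst hb
    have h0 : nf a 0 = a^2 := by rw [nf]; ring
    have : w.coeff 1 = 0 := by rw [← h, h0]; exact sq_coeff_one a
    rw [hw1] at this
    exact absurd this (by decide)
  · have := nf_deg (a := a) hb
    rw [h] at this
    omega

lemma units_triv {u v : R2} (h : u * v = 1) : u = 1 := by
  obtain ⟨a, b, hu⟩ := repr_R2 u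
  obtain ⟨a', b', hv⟩ := repr_R2 v
  have key : toR2 (Polynomial.C (nf a b * nf a' b')) = toR2 (Polynomial.C 1) := by
    rw [map_mul, map_mul, ← nf_spec a b, ← nf_spec a' b', ← hu, ← hv]
    have : u * σ u * (v * σ v) = (u * v) * σ (u * v) := by rw [map_mul]; ring
    rw [this, h, map_one, mul_one]
    simp
  have hmul : nf a b * nf a' b' = 1 := C_toR2_inj key
  have hunit : IsUnit (nf a b) := IsUnit.of_mul_eq_one _ hmul
  obtain ⟨r, hr, hCr⟩ := Polynomial.isUnit_iff.mp hunit
  have hr1 : r = 1 := by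
    have h0 : r ≠ 0 := hr.ne_zero
    have hall : ∀ s : ZMod 2, s ≠ 0 → s = 1 := by decide
    exact hall r h0
  rw [hr1] at hCr
  have hnf1 : nf a b = 1 := by rw [← hCr]; simp
  have hb : b = 0 := by
    by_contra hb
    have := nf_deg (a := a) hb
    rw [hnf1] at this
    simp at this
  subst hb
  have ha2 : a^2 = 1 := by rw [← hnf1, nf]; ring
  have hsq : (a + 1)^2 = 0 := by linear_combination ha2 + (a + 1) * h2P
  have ha1 : a + 1 = 0 := by
    have := pow_eq_zero_iff (n := 2) (by norm_num) |>.mp hsq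
    exact this
  have ha : a = 1 := by linear_combination ha1 - h2P
  rw [hu, ha]
  simp

lemma span_singleton_eq [IsDomain R2] {g h : R2} (hs : Ideal.span {g} = Ideal.span {h}) : g = h := by
  obtain ⟨u, hu⟩ := Ideal.span_singleton_eq_span_singleton.mp hs
  have h1 : (u : R2) = 1 := units_triv u.mul_inv
  rw [← hu, h1, mul_one]

lemma pair_mul_le {a b c d t : R2} (h1 : t ∣ a*c) (h2 : t ∣ a*d) (h3 : t ∣ b*c)
    (h4 : t ∣ b*d) : Ideal.span {a,b} * Ideal.span {c,d} ≤ Ideal.span {t} := by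
  rw [Ideal.mul_le]
  intro r hr s hs
  rw [Ideal.mem_span_pair] at hr hs
  obtain ⟨u₁, v₁, rfl⟩ := hr
  obtain ⟨u₂, v₂, rfl⟩ := hs
  rw [Ideal.mem_span_singleton]
  have e : (u₁*a + v₁*b)*(u₂*c + v₂*d)
      = u₁*u₂*(a*c) + u₁*v₂*(a*d) + v₁*u₂*(b*c) + v₁*v₂*(b*d) := by ring
  rw [e]
  exact dvd_add (dvd_add (dvd_add (h1.mul_left _) (h2.mul_left _)) (h3.mul_left _))
    (h4.mul_left _)

lemma ofP_mul (p q : P) : ofP (p*q) = ofP p * ofP q := by simp [ofP, map_mul]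
lemma gx : ofP (X + 1) = x2 + 1 := by simp [ofP, x2, map_add, map_one]

/-- the key mod-f2 identity : y(y+x) = d -/
lemma E1 : y2 * (y2 + x2) = ofP (X^5+X^3+X^2+X) := by
  rw [y2, x2, ofP, ← map_add, ← map_mul]
  apply toR2_eq
  refine ⟨1, ?_⟩
  rw [f2]
  push_cast [map_add, map_mul, map_pow]
  linear_combination (-(C X + C X^2 + C X^3 + C X^5) : PP) * h2PP

lemma E2 : (y2 + 1) * (y2 + x2 + 1) = ofP (X^5+X^3+X^2+1) := by
  rw [y2, x2, ofP, ← map_one toR2, ← map_add, ← map_add, ← map_add, ← map_mul]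
  apply toR2_eq
  refine ⟨1, ?_⟩
  rw [f2]
  push_cast [map_add, map_mul, map_pow, map_one]
  linear_combination (X - C X^2 - C X^3 - C X^5 : PP) * h2PP

lemma F1 : ofP (X^5+X^3+X^2+X) = (x2+1) * ofP (X^4+X^3+X) := by
  rw [← gx, ← ofP_mul]
  congr 1
  linear_combination (-X^4 : P) * h2P

lemma F2 : ofP (X^5+X^3+X^2+1) = (x2+1) * ofP (X^4+X^3+X+1) := by
  rw [← gx, ← ofP_mul]
  congr 1
  linear_combination (-(X^4 + X) : P) * h2P

lemma F3 : ofP (X^5+X^3+X^2+X) = x2 * ofP (X^4+X^2+X+1) := by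
  rw [x2, ofP, ofP, ← map_mul, ← C_mul]
  congr 2
  ring

lemma P1 : Ideal.span {x2+1, y2} * Ideal.span {x2+1, y2+x2} = Ideal.span {x2+1} := by
  apply le_antisymm
  · exact pair_mul_le (dvd_mul_right _ _) (dvd_mul_right _ _) ⟨y2, by ring⟩
      ⟨ofP (X^4+X^3+X), by rw [E1]; rw [F1]⟩
  · rw [Ideal.span_le, Set.singleton_subset_iff]
    have key : x2 + 1 = (x2+1)*(x2+1) + (x2+1)*(y2+x2) + y2*(x2+1) := by
      linear_combination (-(x2+1)*(y2+x2)) * h2R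
    have mem : (x2+1)*(x2+1) + (x2+1)*(y2+x2) + y2*(x2+1) ∈
        Ideal.span {x2+1, y2} * Ideal.span {x2+1, y2+x2} := by
      refine Ideal.add_mem _ (Ideal.add_mem _ ?_ ?_) ?_
      · exact Ideal.mul_mem_mul (Ideal.subset_span (Set.mem_insert _ _))
          (Ideal.subset_span (Set.mem_insert _ _))
      · exact Ideal.mul_mem_mul (Ideal.subset_span (Set.mem_insert _ _))
          (Ideal.subset_span (Set.mem_insert_of_mem _ rfl))
      · exact Ideal.mul_mem_mul (Ideal.subset_span (Set.mem_insert_of_mem _ rfl))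
          (Ideal.subset_span (Set.mem_insert _ _))
    rw [← key] at mem
    exact mem

lemma P2 : Ideal.span {x2+1, y2+1} * Ideal.span {x2+1, y2+x2+1} = Ideal.span {x2+1} := by
  apply le_antisymm
  · exact pair_mul_le (dvd_mul_right _ _) (dvd_mul_right _ _) ⟨y2+1, by ring⟩
      ⟨ofP (X^4+X^3+X+1), by rw [E2]; rw [F2]⟩
  · rw [Ideal.span_le, Set.singleton_subset_iff]
    have key : x2 + 1 = (x2+1)*(x2+1) + (x2+1)*(y2+x2+1) + (y2+1)*(x2+1) := by
      linear_combination (-(x2+1)*(y2+x2+1)) * h2R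
    have mem : (x2+1)*(x2+1) + (x2+1)*(y2+x2+1) + (y2+1)*(x2+1) ∈
        Ideal.span {x2+1, y2+1} * Ideal.span {x2+1, y2+x2+1} := by
      refine Ideal.add_mem _ (Ideal.add_mem _ ?_ ?_) ?_
      · exact Ideal.mul_mem_mul (Ideal.subset_span (Set.mem_insert _ _))
          (Ideal.subset_span (Set.mem_insert _ _))
      · exact Ideal.mul_mem_mul (Ideal.subset_span (Set.mem_insert _ _))
          (Ideal.subset_span (Set.mem_insert_of_mem _ rfl))
      · exact Ideal.mul_mem_mul (Ideal.subset_span (Set.mem_insert_of_mem _ rfl))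
          (Ideal.subset_span (Set.mem_insert _ _))
    rw [← key] at mem
    exact mem

lemma P3 : Ideal.span {x2, y2} * Ideal.span {x2, y2+x2} = Ideal.span {x2} := by
  apply le_antisymm
  · exact pair_mul_le (dvd_mul_right _ _) (dvd_mul_right _ _) ⟨y2, by ring⟩
      ⟨ofP (X^4+X^2+X+1), by rw [E1]; rw [F3]⟩
  · rw [Ideal.span_le, Set.singleton_subset_iff]
    have e2 : x2 = ofP (X^5+X^3+X^2+X) + x2 * (x2 * ofP (X^3+X+1)) := by
      rw [x2, ofP, ofP, ← map_mul, ← map_mul, ← map_add, ← C_mul, ← C_mul, ← C_add]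
      congr 2
      linear_combination (-(X^5+X^3+X^2) : P) * h2P
    have key : x2 = y2*(y2+x2) + x2 * (x2 * ofP (X^3+X+1)) := by rw [E1]; exact e2
    have mem : y2*(y2+x2) + x2 * (x2 * ofP (X^3+X+1)) ∈
        Ideal.span {x2, y2} * Ideal.span {x2, y2+x2} := by
      refine Ideal.add_mem _ ?_ ?_
      · exact Ideal.mul_mem_mul (Ideal.subset_span (Set.mem_insert_of_mem _ rfl))
          (Ideal.subset_span (Set.mem_insert_of_mem _ rfl))
      · refine Ideal.mul_mem_mul (Ideal.subset_span (Set.mem_insert _ _)) ?_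
        exact Ideal.mul_mem_right _ _ (Ideal.subset_span (Set.mem_insert _ _))
    rw [← key] at mem
    exact mem

lemma map_pair (g h : R2) : Ideal.map σ (Ideal.span {g, h}) = Ideal.span {σ g, σ h} := by
  rw [Ideal.map_span, Set.image_pair]

lemma map_single (g : R2) : Ideal.map σ (Ideal.span {g}) = Ideal.span {σ g} := by
  rw [Ideal.map_span, Set.image_singleton]

lemma σ_x1 : σ (x2 + 1) = x2 + 1 := by rw [map_add, map_one, σ_x2]
lemma σ_y1 : σ (y2 + 1) = y2 + x2 + 1 := by rw [map_add, map_one, σ_y2]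

lemma Q1 : Ideal.span {x2+1, y2} * Ideal.map σ (Ideal.span {x2+1, y2}) = Ideal.span {x2+1} := by
  rw [map_pair, σ_x1, σ_y2]
  exact P1

lemma Q2 : Ideal.span {x2+1, y2+1} * Ideal.map σ (Ideal.span {x2+1, y2+1})
    = Ideal.span {x2+1} := by
  rw [map_pair, σ_x1, σ_y1]
  exact P2

lemma Q3 : Ideal.span {x2, y2} * Ideal.map σ (Ideal.span {x2, y2}) = Ideal.span {x2} := by
  rw [map_pair, σ_x2, σ_y2]
  exact P3

lemma S3 : Ideal.span {x2, y2+x2} = Ideal.span ({x2, y2} : Set R2) := by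
  apply le_antisymm
  · rw [Ideal.span_le, Set.insert_subset_iff, Set.singleton_subset_iff]
    exact ⟨Ideal.subset_span (Set.mem_insert _ _),
      Ideal.add_mem _ (Ideal.subset_span (Set.mem_insert_of_mem _ rfl))
        (Ideal.subset_span (Set.mem_insert _ _))⟩
  · rw [Ideal.span_le, Set.insert_subset_iff, Set.singleton_subset_iff]
    refine ⟨Ideal.subset_span (Set.mem_insert _ _), ?_⟩
    have hy2 : y2 = (y2 + x2) - x2 := by ring
    have mem : (y2 + x2) - x2 ∈ Ideal.span {x2, y2+x2} :=
      Ideal.sub_mem _ (Ideal.subset_span (Set.mem_insert_of_mem _ rfl))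
        (Ideal.subset_span (Set.mem_insert _ _))
    rw [← hy2] at mem
    exact mem

lemma w1_coeff : (X + 1 : P).coeff 1 = 1 := by simp [Polynomial.coeff_one]
lemma w1_deg : (X + 1 : P).natDegree < 5 := by
  have : (X + 1 : P).natDegree ≤ 1 := by compute_degree
  omega
lemma w2_coeff : (X^2 + X : P).coeff 1 = 1 := by
  rw [Polynomial.coeff_add]
  simp
lemma w2_deg : (X^2 + X : P).natDegree < 5 := by
  have : (X^2 + X : P).natDegree ≤ 2 := by compute_degree
  omega

/-- from a principal product with conjugate equal to span (x2+1) : contradiction -/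
lemma not_principal_aux [IsDedekindDomain R2] {I : Ideal R2}
    (hQ : I * Ideal.map σ I = Ideal.span {x2+1}) (h : I.IsPrincipal) : False := by
  obtain ⟨g, hg⟩ := h
  have hg' : I = Ideal.span {g} := hg
  rw [hg', map_single, Ideal.span_singleton_mul_span_singleton] at hQ
  have hgg : g * σ g = x2 + 1 := span_singleton_eq hQ
  obtain ⟨a, b, rfl⟩ := repr_R2 g
  rw [nf_spec] at hgg
  have : toR2 (Polynomial.C (nf a b)) = toR2 (Polynomial.C (X + 1)) := by
    rw [hgg, ← gx, ofP]
  exact nf_not w1_coeff w1_deg (C_toR2_inj this)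

lemma not_prod_aux [IsDedekindDomain R2] {I : Ideal R2}
    (hQ : I * Ideal.map σ I = Ideal.span {x2+1})
    (h : (I * Ideal.span {x2, y2}).IsPrincipal) : False := by
  obtain ⟨g, hg⟩ := h
  have hg' : I * Ideal.span {x2, y2} = Ideal.span {g} := hg
  have key : Ideal.span {(x2+1) * x2} = Ideal.span {g * σ g} := by
    calc Ideal.span {(x2+1) * x2}
        = Ideal.span {x2+1} * Ideal.span {x2} := (Ideal.span_singleton_mul_span_singleton _ _).symm
      _ = (I * Ideal.map σ I) * (Ideal.span {x2, y2} * Ideal.map σ (Ideal.span {x2, y2})) := by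
          rw [hQ, Q3]
      _ = (I * Ideal.span {x2, y2}) * Ideal.map σ (I * Ideal.span {x2, y2}) := by
          rw [Ideal.map_mul]; ring
      _ = Ideal.span {g} * Ideal.span {σ g} := by rw [hg', map_single]
      _ = Ideal.span {g * σ g} := Ideal.span_singleton_mul_span_singleton _ _
  have hgg : g * σ g = (x2+1) * x2 := (span_singleton_eq key).symm
  obtain ⟨a, b, rfl⟩ := repr_R2 g
  rw [nf_spec] at hgg
  have : toR2 (Polynomial.C (nf a b)) = toR2 (Polynomial.C (X^2 + X)) := by
    rw [hgg, ← gx]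
    simp only [ofP, x2]
    rw [← map_mul, ← C_mul]
    congr 2
    ring
  exact nf_not w2_coeff w2_deg (C_toR2_inj this)


open scoped nonZeroDivisors

/-- In the class group of `R₂`, the classes of the ideals `(x − 1, y)` and `(x − 1, y − 1)`
are nontrivial and differ from the class of `(x, y)`.  (The hypotheses `IsDedekindDomain R2`
and `h₀, h₁₀, h₁₁` are true facts, supplied so that the classes make sense.) -/
theorem stmt_8 [IsDedekindDomain R2]
    (h₀ : Ideal.span {x2, y2} ∈ (Ideal R2)⁰)
    (h₁₀ : Ideal.span {x2 - 1, y2} ∈ (Ideal R2)⁰)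
    (h₁₁ : Ideal.span {x2 - 1, y2 - 1} ∈ (Ideal R2)⁰) :
    (ClassGroup.mk0 (⟨Ideal.span {x2 - 1, y2}, h₁₀⟩ : (Ideal R2)⁰) ≠ 1 ∧
      ClassGroup.mk0 (⟨Ideal.span {x2 - 1, y2}, h₁₀⟩ : (Ideal R2)⁰) ≠
        ClassGroup.mk0 (⟨Ideal.span {x2, y2}, h₀⟩ : (Ideal R2)⁰)) ∧
    (ClassGroup.mk0 (⟨Ideal.span {x2 - 1, y2 - 1}, h₁₁⟩ : (Ideal R2)⁰) ≠ 1 ∧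
      ClassGroup.mk0 (⟨Ideal.span {x2 - 1, y2 - 1}, h₁₁⟩ : (Ideal R2)⁰) ≠
        ClassGroup.mk0 (⟨Ideal.span {x2, y2}, h₀⟩ : (Ideal R2)⁰)) := by
  have hx : x2 - 1 = x2 + 1 := by linear_combination -h2R
  have hy : y2 - 1 = y2 + 1 := by linear_combination -h2R
  have hI10 : Ideal.span {x2 - 1, y2} = Ideal.span {x2 + 1, y2} := by rw [hx]
  have hI11 : Ideal.span {x2 - 1, y2 - 1} = Ideal.span {x2 + 1, y2 + 1} := by rw [hx, hy]
  have h₁₀' : Ideal.span {x2 + 1, y2} ∈ (Ideal R2)⁰ := hI10 ▸ h₁₀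
  have h₁₁' : Ideal.span {x2 + 1, y2 + 1} ∈ (Ideal R2)⁰ := hI11 ▸ h₁₁
  have e10 : (⟨Ideal.span {x2 - 1, y2}, h₁₀⟩ : (Ideal R2)⁰)
      = ⟨Ideal.span {x2 + 1, y2}, h₁₀'⟩ := Subtype.ext hI10
  have e11 : (⟨Ideal.span {x2 - 1, y2 - 1}, h₁₁⟩ : (Ideal R2)⁰)
      = ⟨Ideal.span {x2 + 1, y2 + 1}, h₁₁'⟩ := Subtype.ext hI11
  -- J * J is principal
  have hJJ : (Ideal.span {x2, y2} * Ideal.span ({x2, y2} : Set R2)).IsPrincipal := by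
    refine ⟨x2, ?_⟩
    show Ideal.span {x2, y2} * Ideal.span ({x2, y2} : Set R2) = Ideal.span {x2}
    nth_rewrite 2 [← S3]
    exact P3
  have hJmul : ClassGroup.mk0 (⟨Ideal.span {x2, y2}, h₀⟩ : (Ideal R2)⁰)
      * ClassGroup.mk0 (⟨Ideal.span {x2, y2}, h₀⟩ : (Ideal R2)⁰) = 1 := by
    rw [← MonoidHom.map_mul]
    have : (⟨Ideal.span {x2, y2}, h₀⟩ * ⟨Ideal.span {x2, y2}, h₀⟩ : (Ideal R2)⁰)
        = ⟨Ideal.span {x2, y2} * Ideal.span {x2, y2}, mul_mem h₀ h₀⟩ := Subtype.ext rfl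
    rw [this, ClassGroup.mk0_eq_one_iff]
    exact hJJ
  constructor
  · constructor
    · intro hcl
      rw [e10, ClassGroup.mk0_eq_one_iff] at hcl
      exact not_principal_aux Q1 hcl
    · intro hcl
      rw [e10] at hcl
      have hone : ClassGroup.mk0 (⟨Ideal.span {x2 + 1, y2}, h₁₀'⟩ : (Ideal R2)⁰)
          * ClassGroup.mk0 (⟨Ideal.span {x2, y2}, h₀⟩ : (Ideal R2)⁰) = 1 := by
        rw [hcl]; exact hJmul
      rw [← MonoidHom.map_mul] at hone
      have heq : (⟨Ideal.span {x2 + 1, y2}, h₁₀'⟩ * ⟨Ideal.span {x2, y2}, h₀⟩ : (Ideal R2)⁰)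
          = ⟨Ideal.span {x2 + 1, y2} * Ideal.span {x2, y2}, mul_mem h₁₀' h₀⟩ := Subtype.ext rfl
      rw [heq, ClassGroup.mk0_eq_one_iff] at hone
      exact not_prod_aux Q1 hone
  · constructor
    · intro hcl
      rw [e11, ClassGroup.mk0_eq_one_iff] at hcl
      exact not_principal_aux Q2 hcl
    · intro hcl
      rw [e11] at hcl
      have hone : ClassGroup.mk0 (⟨Ideal.span {x2 + 1, y2 + 1}, h₁₁'⟩ : (Ideal R2)⁰)
          * ClassGroup.mk0 (⟨Ideal.span {x2, y2}, h₀⟩ : (Ideal R2)⁰) = 1 := by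
        rw [hcl]; exact hJmul
      rw [← MonoidHom.map_mul] at hone
      have heq : (⟨Ideal.span {x2 + 1, y2 + 1}, h₁₁'⟩ * ⟨Ideal.span {x2, y2}, h₀⟩ : (Ideal R2)⁰)
          = ⟨Ideal.span {x2 + 1, y2 + 1} * Ideal.span {x2, y2}, mul_mem h₁₁' h₀⟩ := Subtype.ext rfl
      rw [heq, ClassGroup.mk0_eq_one_iff] at hone
      exact not_prod_aux Q2 hone
end
end
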